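/- For every finite simple graph G, γ_g(G) ≤ (1 + ln(1 + Δ(G))) · γ_f(G), where γ_g is the greedy domination number, γ_f the fractional domination number, and Δ(G) the maximum degree. -/

import Mathlib

open Finset

namespace SG

variable {V : Type*}

/-- Closed neighborhood of a vertex as a `Finset`. -/
def closedNbhd [Fintype V] [DecidableEq V] (G : SimpleGraph V) [DecidableRel G.Adj]
    (v : V) : Finset V :=
  insert v (G.neighborFinset v)

/-- A fractional domination: weights in `[0,1]` with each closed neighborhood of weight `≥ 1`. -/
def IsFracDom [Fintype V] [DecidableEq V] (G : SimpleGraph V) [DecidableRel G.Adj]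
    (f : V → ℝ) : Prop :=
  (∀ v, 0 ≤ f v ∧ f v ≤ 1) ∧ ∀ v, 1 ≤ ∑ u ∈ closedNbhd G v, f u

/-- The fractional domination number. -/
noncomputable def fracDomNumber [Fintype V] [DecidableEq V] (G : SimpleGraph V)
    [DecidableRel G.Adj] : ℝ :=
  sInf {x | ∃ f, IsFracDom G f ∧ x = ∑ v, f v}

/-- A dominating set: every vertex not in `S` is adjacent to some vertex of `S`. -/
def IsDomSet (G : SimpleGraph V) (S : Finset V) : Prop :=
  ∀ v, v ∉ S → ∃ u ∈ S, G.Adj u v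

/-- The domination number. -/
noncomputable def domNumber [Fintype V] (G : SimpleGraph V) : ℕ :=
  sInf {k | ∃ S : Finset V, S.card = k ∧ IsDomSet G S}

variable [Fintype V] [LinearOrder V]

/-- Number of new (not yet dominated) vertices that `v` would dominate, given
that the vertices of `D` are already dominated. -/
def newScore (G : SimpleGraph V) [DecidableRel G.Adj] (D : Finset V) (v : V) : ℕ :=
  (closedNbhd G v \ D).card

/-- One run of the greedy domination algorithm (with fuel), starting with the
vertices of `D` already dominated.  At each step we pick a vertex dominating as
many new vertices as possible, ties broken by taking the earliest vertex in the
linear order on `V`. -/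
def greedyAux (G : SimpleGraph V) [DecidableRel G.Adj] : ℕ → Finset V → List V
  | 0, _ => []
  | (n + 1), D =>
    if D = Finset.univ then []
    else
      let C := Finset.univ.filter fun v => ∀ u, newScore G D u ≤ newScore G D v
      if h : C.Nonempty then
        C.min' h :: greedyAux G n (D ∪ closedNbhd G (C.min' h))
      else []

/-- The greedy dominating sequence of `G`. -/
def greedyList (G : SimpleGraph V) [DecidableRel G.Adj] : List V :=
  greedyAux G (Fintype.card V) ∅

/-- The greedy domination number: the length of the greedy dominating sequence. -/
def greedyNumber (G : SimpleGraph V) [DecidableRel G.Adj] : ℕ :=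
  (greedyList G).length

/-- The index of the first vertex in the greedy dominating sequence which dominates `u`. -/
def stepOf (G : SimpleGraph V) [DecidableRel G.Adj] (u : V) : ℕ :=
  (greedyList G).findIdx fun x => u ∈ closedNbhd G x

/-- `F(u)`: the set of vertices first dominated at the same greedy step as `u`. -/
def Fset (G : SimpleGraph V) [DecidableRel G.Adj] (u : V) : Finset V :=
  Finset.univ.filter fun w => stepOf G w = stepOf G u



section ChargeArgument

variable (G : SimpleGraph V) [DecidableRel G.Adj]

lemma mem_closedNbhd_comm {u x : V} : x ∈ closedNbhd G u ↔ u ∈ closedNbhd G x := by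
  simp only [closedNbhd, mem_insert, SimpleGraph.mem_neighborFinset]
  constructor
  · rintro (rfl | h)
    · exact Or.inl rfl
    · exact Or.inr h.symm
  · rintro (rfl | h)
    · exact Or.inl rfl
    · exact Or.inr h.symm

lemma double_count (A : Finset V) (f : V → ℝ) :
    ∑ u ∈ A, ∑ x ∈ closedNbhd G u, f x
      = ∑ x : V, f x * ((closedNbhd G x ∩ A).card : ℝ) := by
  calc ∑ u ∈ A, ∑ x ∈ closedNbhd G u, f x
      = ∑ u ∈ A, ∑ x : V, if u ∈ closedNbhd G x then f x else 0 := by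
        refine sum_congr rfl fun u _ => ?_
        rw [← Finset.sum_filter]
        refine (Finset.sum_congr ?_ fun _ _ => rfl)
        ext x
        simp [mem_closedNbhd_comm G]
    _ = ∑ x : V, ∑ u ∈ A, if u ∈ closedNbhd G x then f x else 0 := Finset.sum_comm
    _ = ∑ x : V, f x * ((closedNbhd G x ∩ A).card : ℝ) := by
        refine sum_congr rfl fun x _ => ?_
        rw [Finset.sum_ite_mem, Finset.sum_const, Finset.inter_comm]
        simp [mul_comm]

noncomputable def charge (G : SimpleGraph V) [DecidableRel G.Adj] :
    ℕ → Finset V → V → ℝ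
  | 0, _, _ => 0
  | (n + 1), D, x =>
    if D = Finset.univ then 0
    else
      let C := Finset.univ.filter fun v => ∀ u, newScore G D u ≤ newScore G D v
      if h : C.Nonempty then
        ((closedNbhd G x ∩ (closedNbhd G (C.min' h) \ D)).card : ℝ)
            / (newScore G D (C.min' h) : ℝ)
          + charge G n (D ∪ closedNbhd G (C.min' h)) x
      else 0

noncomputable def Hreal (n : ℕ) : ℝ := ∑ i ∈ Finset.range n, ((i : ℝ) + 1)⁻¹

lemma Hreal_nonneg (n : ℕ) : 0 ≤ Hreal n := by
  unfold Hreal; positivity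

lemma Hreal_mono {m n : ℕ} (h : m ≤ n) : Hreal m ≤ Hreal n := by
  unfold Hreal
  refine Finset.sum_le_sum_of_subset_of_nonneg (Finset.range_subset_range.mpr h) ?_
  intro i _ _; positivity

lemma Hreal_eq (n : ℕ) : Hreal n = (harmonic n : ℝ) := by
  unfold Hreal harmonic
  push_cast
  rfl

lemma Hreal_le (n : ℕ) : Hreal n ≤ 1 + Real.log n := by
  rw [Hreal_eq]; exact harmonic_le_one_add_log n

lemma Hreal_step {a r m : ℕ} (har : a ≤ r) (hrm : r ≤ m) :
    (a : ℝ) / (m : ℝ) + Hreal (r - a) ≤ Hreal r := by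
  rcases Nat.eq_zero_or_pos a with rfl | ha
  · simp
  have hr : 0 < r := lt_of_lt_of_le ha har
  have hm : 0 < m := lt_of_lt_of_le hr hrm
  have h1 : (a : ℝ) / m ≤ (a : ℝ) / r := by
    apply div_le_div_of_nonneg_left (by positivity) (by exact_mod_cast hr)
    exact_mod_cast hrm
  have h2 : (a : ℝ) / r + Hreal (r - a) ≤ Hreal r := by
    have hsplit : Hreal (r - a) + ∑ i ∈ Finset.Ico (r - a) r, ((i : ℝ) + 1)⁻¹ = Hreal r := by
      unfold Hreal
      rw [Finset.range_eq_Ico, Finset.range_eq_Ico]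
      exact Finset.sum_Ico_consecutive (fun i : ℕ => ((i : ℝ) + 1)⁻¹) (Nat.zero_le _) (Nat.sub_le _ _)
    have hbound : (a : ℝ) / r ≤ ∑ i ∈ Finset.Ico (r - a) r, ((i : ℝ) + 1)⁻¹ := by
      have := Finset.card_nsmul_le_sum (Finset.Ico (r - a) r)
        (fun i => ((i : ℝ) + 1)⁻¹) ((r : ℝ)⁻¹) ?_
      · rwa [Nat.card_Ico, Nat.sub_sub_self har, nsmul_eq_mul, ← div_eq_mul_inv] at this
      · intro i hi
        rw [Finset.mem_Ico] at hi
        have : (i : ℝ) + 1 ≤ r := by exact_mod_cast Nat.succ_le_of_lt hi.2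
        exact inv_anti₀ (by positivity) this
    linarith
  linarith

lemma charge_le_Hreal :
    ∀ (n : ℕ) (D : Finset V) (x : V),
      charge G n D x ≤ Hreal ((closedNbhd G x \ D).card)
  | 0, D, x => by rw [charge]; exact Hreal_nonneg _
  | (n + 1), D, x => by
    by_cases hD : D = Finset.univ
    · simp only [charge, if_pos hD]; exact Hreal_nonneg _
    by_cases h : (Finset.univ.filter fun v => ∀ u, newScore G D u ≤ newScore G D v).Nonempty
    · simp only [charge, if_neg hD, dif_pos h]
      set c := (Finset.univ.filter fun v => ∀ u, newScore G D u ≤ newScore G D v).min' h with hc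
      have hmax : ∀ u, newScore G D u ≤ newScore G D c :=
        (Finset.mem_filter.mp (Finset.min'_mem _ h)).2
      have IH := charge_le_Hreal n (D ∪ closedNbhd G c) x
      have hseteq : closedNbhd G x ∩ (closedNbhd G c \ D)
          = (closedNbhd G x \ D) ∩ closedNbhd G c := by
        ext y; simp only [mem_inter, mem_sdiff]; tauto
      have hset : closedNbhd G x \ (D ∪ closedNbhd G c)
          = (closedNbhd G x \ D) \ closedNbhd G c := by
        ext y; simp only [mem_sdiff, mem_union]; tauto
      have hsum : ((closedNbhd G x \ D) \ closedNbhd G c).card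
          + ((closedNbhd G x \ D) ∩ closedNbhd G c).card = (closedNbhd G x \ D).card :=
        Finset.card_sdiff_add_card_inter _ _
      have har : (closedNbhd G x ∩ (closedNbhd G c \ D)).card ≤ (closedNbhd G x \ D).card := by
        rw [hseteq]; omega
      have hcard : (closedNbhd G x \ (D ∪ closedNbhd G c)).card
          = (closedNbhd G x \ D).card - (closedNbhd G x ∩ (closedNbhd G c \ D)).card := by
        rw [hset, hseteq]; omega
      have hrm : (closedNbhd G x \ D).card ≤ newScore G D c := hmax x
      calc ((closedNbhd G x ∩ (closedNbhd G c \ D)).card : ℝ) / (newScore G D c : ℝ)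
            + charge G n (D ∪ closedNbhd G c) x
          ≤ ((closedNbhd G x ∩ (closedNbhd G c \ D)).card : ℝ) / (newScore G D c : ℝ)
            + Hreal ((closedNbhd G x \ D).card - (closedNbhd G x ∩ (closedNbhd G c \ D)).card) := by
            rw [← hcard]; linarith [IH]
        _ ≤ Hreal ((closedNbhd G x \ D).card) := Hreal_step har hrm
    · simp only [charge, if_neg hD, dif_neg h]; exact Hreal_nonneg _

lemma length_le_sum (f : V → ℝ) (hf : IsFracDom G f) :
    ∀ (n : ℕ) (D : Finset V),
      ((greedyAux G n D).length : ℝ) ≤ ∑ x : V, f x * charge G n D x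
  | 0, D => by simp [greedyAux, charge]
  | (n + 1), D => by
    by_cases hD : D = Finset.univ
    · simp [greedyAux, charge, if_pos hD]
    by_cases h : (Finset.univ.filter fun v => ∀ u, newScore G D u ≤ newScore G D v).Nonempty
    · simp only [greedyAux, charge, if_neg hD, dif_pos h, List.length_cons]
      set c := (Finset.univ.filter fun v => ∀ u, newScore G D u ≤ newScore G D v).min' h with hc
      have hmax : ∀ u, newScore G D u ≤ newScore G D c :=
        (Finset.mem_filter.mp (Finset.min'_mem _ h)).2
      have IH := length_le_sum f hf n (D ∪ closedNbhd G c)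
      -- the chosen vertex has positive score
      obtain ⟨v, hv⟩ : ∃ v, v ∉ D := by
        by_contra hcon
        push_neg at hcon
        exact hD (Finset.eq_univ_iff_forall.mpr hcon)
      have hm1 : 1 ≤ newScore G D c := by
        refine le_trans ?_ (hmax v)
        have : v ∈ closedNbhd G v \ D :=
          Finset.mem_sdiff.mpr ⟨Finset.mem_insert_self _ _, hv⟩
        exact Finset.card_pos.mpr ⟨v, this⟩
      have hm0 : (0 : ℝ) < (newScore G D c : ℝ) := by exact_mod_cast hm1
      have key : (1 : ℝ) ≤ ∑ x : V,
          f x * (((closedNbhd G x ∩ (closedNbhd G c \ D)).card : ℝ) / (newScore G D c : ℝ)) := by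
        have hre : ∑ x : V,
            f x * (((closedNbhd G x ∩ (closedNbhd G c \ D)).card : ℝ) / (newScore G D c : ℝ))
            = (∑ x : V, f x * ((closedNbhd G x ∩ (closedNbhd G c \ D)).card : ℝ))
              / (newScore G D c : ℝ) := by
          rw [Finset.sum_div]
          exact Finset.sum_congr rfl fun x _ => by ring
        rw [hre, le_div_iff₀ hm0, one_mul]
        calc (newScore G D c : ℝ) = ∑ u ∈ closedNbhd G c \ D, (1 : ℝ) := by
              simp [newScore]
          _ ≤ ∑ u ∈ closedNbhd G c \ D, ∑ x ∈ closedNbhd G u, f x :=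
              Finset.sum_le_sum fun u _ => hf.2 u
          _ = ∑ x : V, f x * ((closedNbhd G x ∩ (closedNbhd G c \ D)).card : ℝ) :=
              double_count G _ f
      have hsplit : ∑ x : V, f x *
            (((closedNbhd G x ∩ (closedNbhd G c \ D)).card : ℝ) / (newScore G D c : ℝ)
              + charge G n (D ∪ closedNbhd G c) x)
          = (∑ x : V, f x *
              (((closedNbhd G x ∩ (closedNbhd G c \ D)).card : ℝ) / (newScore G D c : ℝ)))
            + ∑ x : V, f x * charge G n (D ∪ closedNbhd G c) x := by
        rw [← Finset.sum_add_distrib]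
        exact Finset.sum_congr rfl fun x _ => by ring
      rw [hsplit]
      push_cast
      linarith
    · simp only [greedyAux, charge, if_neg hD, dif_neg h]
      simp


end ChargeArgument

/-- `γ_g(G) ≤ (1 + ln(1+Δ(G))) ⬝ γ_f(G)`. -/
theorem greedy_le_log_mul_fracDom {V : Type*} [Fintype V] [LinearOrder V]
    (G : SimpleGraph V) [DecidableRel G.Adj] :
    (greedyNumber G : ℝ) ≤ (1 + Real.log (1 + (G.maxDegree : ℝ))) * fracDomNumber G := by
  set c₀ := 1 + Real.log (1 + (G.maxDegree : ℝ)) with hc₀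
  have hlog : 0 ≤ Real.log (1 + (G.maxDegree : ℝ)) :=
    Real.log_nonneg (le_add_of_nonneg_right (Nat.cast_nonneg _))
  have hc₀pos : (0 : ℝ) < c₀ := by rw [hc₀]; linarith
  have hH : Hreal (G.maxDegree + 1) ≤ c₀ := by
    have h1 := Hreal_le (G.maxDegree + 1)
    have h2 : ((G.maxDegree + 1 : ℕ) : ℝ) = 1 + (G.maxDegree : ℝ) := by push_cast; ring
    rw [h2] at h1
    rw [hc₀]; exact h1
  have hcharge : ∀ (x : V) (D : Finset V) (n : ℕ), charge G n D x ≤ c₀ := by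
    intro x D n
    refine le_trans (charge_le_Hreal G n D x) (le_trans (Hreal_mono ?_) hH)
    calc (closedNbhd G x \ D).card ≤ (closedNbhd G x).card :=
          Finset.card_le_card Finset.sdiff_subset
      _ = G.degree x + 1 := by
          rw [closedNbhd, Finset.card_insert_of_notMem (G.notMem_neighborFinset_self x),
            SimpleGraph.card_neighborFinset_eq_degree]
      _ ≤ G.maxDegree + 1 := by have := G.degree_le_maxDegree x; omega
  have main : ∀ y ∈ {x | ∃ f, IsFracDom G f ∧ x = ∑ v, f v}, (greedyNumber G : ℝ) ≤ c₀ * y := by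
    rintro y ⟨f, hf, rfl⟩
    simp only [greedyNumber, greedyList]
    calc ((greedyAux G (Fintype.card V) ∅).length : ℝ)
        ≤ ∑ x : V, f x * charge G (Fintype.card V) ∅ x := length_le_sum G f hf _ _
      _ ≤ ∑ x : V, f x * c₀ := Finset.sum_le_sum fun x _ =>
          mul_le_mul_of_nonneg_left (hcharge x _ _) (hf.1 x).1
      _ = c₀ * ∑ v, f v := by rw [← Finset.sum_mul]; ring
  have hne : Set.Nonempty {x | ∃ f, IsFracDom G f ∧ x = ∑ v, f v} := by
    refine ⟨∑ v : V, (1 : ℝ), fun _ => 1, ⟨fun v => ⟨zero_le_one, le_refl 1⟩, fun v => ?_⟩, rfl⟩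
    have hpos : 0 < (closedNbhd G v).card :=
      Finset.card_pos.mpr ⟨v, Finset.mem_insert_self _ _⟩
    rw [Finset.sum_const, nsmul_eq_mul, mul_one]
    exact_mod_cast hpos
  have hlb : (greedyNumber G : ℝ) / c₀ ≤ fracDomNumber G := by
    unfold fracDomNumber
    refine le_csInf hne fun y hy => ?_
    rw [div_le_iff₀ hc₀pos]
    exact (main y hy).trans_eq (mul_comm _ _)
  rw [mul_comm]
  exact (div_le_iff₀ hc₀pos).mp hlb

end SG
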